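/- The set S3 = L ∪ {(x−1, y) : (x,y) ∈ L}, where L = {(x,y) ∈ ℤ×ℤ : x ≡ y (mod 4) and x + 3y ≡ 0 (mod 8)}, is a dominating set of the infinite hexagonal grid T3: every vertex of T3 not in S3 is adjacent to a vertex of S3. -/

import Mathlib

/-- The infinite hexagonal grid: vertices `ℤ × ℤ`; `(x,y)` is adjacent to `(x,y+1)` and
`(x,y−1)`, and additionally to `(x+1,y)` when `x+y` is even (equivalently, to `(x−1,y)` when
`x+y` is odd). -/
def T3 : SimpleGraph (ℤ × ℤ) where
  Adj p q :=
    (p.1 = q.1 ∧ (q.2 = p.2 + 1 ∨ p.2 = q.2 + 1)) ∨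
    (p.2 = q.2 ∧ ((Even (p.1 + p.2) ∧ q.1 = p.1 + 1) ∨ (Even (q.1 + q.2) ∧ p.1 = q.1 + 1)))
  symm := by
    constructor
    rintro p q (⟨h1, h2 | h2⟩ | ⟨h1, h2 | h2⟩)
    · exact Or.inl ⟨h1.symm, Or.inr h2⟩
    · exact Or.inl ⟨h1.symm, Or.inl h2⟩
    · exact Or.inr ⟨h1.symm, Or.inr h2⟩
    · exact Or.inr ⟨h1.symm, Or.inl h2⟩
  loopless := by
    constructor
    rintro p (⟨h1, h2 | h2⟩ | ⟨h1, ⟨_, h2⟩ | ⟨_, h2⟩⟩) <;> omega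

/-- The lattice `L = {(x,y) : x ≡ y (mod 4), x + 3y ≡ 0 (mod 8)}` (generated by `(2,2)` and
`(3,−1)`). -/
def L : Set (ℤ × ℤ) := {p | Int.ModEq 4 p.1 p.2 ∧ Int.ModEq 8 (p.1 + 3 * p.2) 0}

/-- `S3 = L ∪ {(x−1, y) : (x,y) ∈ L}`. -/
def S3 : Set (ℤ × ℤ) := L ∪ (fun p : ℤ × ℤ => (p.1 - 1, p.2)) '' L

/-- `S3` is a dominating set of the infinite hexagonal grid `T3`. -/
theorem stmt_8 : ∀ p : ℤ × ℤ, p ∉ S3 → ∃ q ∈ S3, T3.Adj p q := by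
  rintro ⟨x, y⟩ hp
  simp only [S3, L, Set.mem_union, Set.mem_image, Set.mem_setOf_eq, Int.ModEq,
    Prod.mk.injEq, Prod.exists] at hp ⊢
  have hr : (x + 3*y) % 8 = 1 ∨ (x + 3*y) % 8 = 2 ∨ (x + 3*y) % 8 = 3 ∨
      (x + 3*y) % 8 = 4 ∨ (x + 3*y) % 8 = 5 ∨ (x + 3*y) % 8 = 6 := by
    have h0 : ¬ (x + 3*y) % 8 = 0 := fun h => hp (Or.inl ⟨by omega, by omega⟩)
    have h7 : ¬ (x + 3*y) % 8 = 7 := fun h =>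
      hp (Or.inr ⟨x+1, y, ⟨by omega, by omega⟩, by omega, rfl⟩)
    omega
  have hAdj : ∀ a b : ℤ, T3.Adj (x, y) (a, b) ↔
      (x = a ∧ (b = y + 1 ∨ y = b + 1)) ∨
      (y = b ∧ ((Even (x + y) ∧ a = x + 1) ∨ (Even (a + b) ∧ x = a + 1))) := by
    intro a b; rfl
  rcases hr with h | h | h | h | h | h
  · refine ⟨x-1, y, Or.inl ⟨by omega, by omega⟩, ?_⟩
    rw [hAdj]
    exact Or.inr ⟨rfl, Or.inr ⟨Int.even_iff.mpr (by omega), by omega⟩⟩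
  · refine ⟨x, y-1, Or.inr ⟨x+1, y-1, ⟨by omega, by omega⟩, by omega, rfl⟩, ?_⟩
    rw [hAdj]
    exact Or.inl ⟨rfl, Or.inr (by omega)⟩
  · refine ⟨x, y-1, Or.inl ⟨by omega, by omega⟩, ?_⟩
    rw [hAdj]
    exact Or.inl ⟨rfl, Or.inr (by omega)⟩
  · refine ⟨x, y+1, Or.inr ⟨x+1, y+1, ⟨by omega, by omega⟩, by omega, rfl⟩, ?_⟩
    rw [hAdj]
    exact Or.inl ⟨rfl, Or.inl rfl⟩
  · refine ⟨x, y+1, Or.inl ⟨by omega, by omega⟩, ?_⟩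
    rw [hAdj]
    exact Or.inl ⟨rfl, Or.inl rfl⟩
  · refine ⟨x+1, y, Or.inr ⟨x+2, y, ⟨by omega, by omega⟩, by omega, rfl⟩, ?_⟩
    rw [hAdj]
    exact Or.inr ⟨rfl, Or.inl ⟨Int.even_iff.mpr (by omega), rfl⟩⟩
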